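/- Let a ∈ ℝ and k > a. For T > 0 small (in particular a·T < 1 and k < k^u(a,T)), define f_{a,T}(k) = (−k·sinh(ℓT) − ℓ)/(2ℓ·(a − k·cosh(ℓT))) with ℓ = √(a² − k²) if |k| < −a; f_{a,T}(k) = T/4 + 1/(4|a|) if k = |a| and a ≠ 0; and f_{a,T}(k) = (−k·sin(ℓT) − ℓ)/(2ℓ·(a − k·cos(ℓT))) with ℓ = √(k² − a²) if k > |a|. Then lim_{T→0⁺} ( f_{a,T}(k) − 1/(2·(k − a)) ) / T = k/(2·(k − a)). -/

import Mathlib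

open scoped Classical in
/-- The squared `L²`-norm of the fundamental solution of `dx/dt = a x(t) - k x(t-T)`,
for a stabilizing gain `k`. -/
noncomputable def fdel (T a k : ℝ) : ℝ :=
  if |k| < -a then
    (-k * Real.sinh (Real.sqrt (a ^ 2 - k ^ 2) * T) - Real.sqrt (a ^ 2 - k ^ 2)) /
      (2 * Real.sqrt (a ^ 2 - k ^ 2) *
        (a - k * Real.cosh (Real.sqrt (a ^ 2 - k ^ 2) * T)))
  else if k = |a| ∧ a ≠ 0 then T / 4 + 1 / (4 * |a|)
  else
    (-k * Real.sin (Real.sqrt (k ^ 2 - a ^ 2) * T) - Real.sqrt (k ^ 2 - a ^ 2)) /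
      (2 * Real.sqrt (k ^ 2 - a ^ 2) *
        (a - k * Real.cos (Real.sqrt (k ^ 2 - a ^ 2) * T)))

theorem stmt13 (a k : ℝ) (hk : a < k) :
    Filter.Tendsto (fun T : ℝ => (fdel T a k - 1 / (2 * (k - a))) / T)
      (nhdsWithin 0 (Set.Ioi (0 : ℝ))) (nhds (k / (2 * (k - a)))) := by
  have hka : k - a ≠ 0 := sub_ne_zero.mpr hk.ne'
  have hne : a - k ≠ 0 := sub_ne_zero.mpr hk.ne
  have key : HasDerivAt (fun T : ℝ => fdel T a k) (k / (2 * (k - a))) 0 ∧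
      fdel 0 a k = 1 / (2 * (k - a)) := by
    by_cases h1 : |k| < -a
    · -- sinh branch
      set ℓ : ℝ := Real.sqrt (a ^ 2 - k ^ 2) with hℓdef
      have hsq : k ^ 2 < a ^ 2 := by
        have h' : |k| < |a| := h1.trans_le (neg_le_abs a)
        calc k ^ 2 = |k| ^ 2 := (sq_abs k).symm
          _ < |a| ^ 2 := by
            exact pow_lt_pow_left₀ h' (abs_nonneg k) (by norm_num)
          _ = a ^ 2 := sq_abs a
      have hℓ : 0 < ℓ := Real.sqrt_pos.mpr (by linarith)
      have hℓne : ℓ ≠ 0 := hℓ.ne'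
      have hfun : (fun T : ℝ => fdel T a k) =
          fun T : ℝ => (-k * Real.sinh (ℓ * T) - ℓ) /
            (2 * ℓ * (a - k * Real.cosh (ℓ * T))) := by
        funext T; simp only [fdel, if_pos h1, hℓdef]
      have hlin : HasDerivAt (fun T : ℝ => ℓ * T) (ℓ * 1) 0 :=
        (hasDerivAt_id 0).const_mul ℓ
      have hs : HasDerivAt (fun T : ℝ => Real.sinh (ℓ * T))
          (Real.cosh (ℓ * 0) * (ℓ * 1)) 0 :=
        (Real.hasDerivAt_sinh (ℓ * 0)).comp 0 hlin
      have hc : HasDerivAt (fun T : ℝ => Real.cosh (ℓ * T))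
          (Real.sinh (ℓ * 0) * (ℓ * 1)) 0 :=
        (Real.hasDerivAt_cosh (ℓ * 0)).comp 0 hlin
      have hN : HasDerivAt (fun T : ℝ => -k * Real.sinh (ℓ * T) - ℓ)
          (-k * (Real.cosh (ℓ * 0) * (ℓ * 1))) 0 := (hs.const_mul (-k)).sub_const ℓ
      have hD : HasDerivAt (fun T : ℝ => 2 * ℓ * (a - k * Real.cosh (ℓ * T)))
          (2 * ℓ * (-(k * (Real.sinh (ℓ * 0) * (ℓ * 1))))) 0 :=
        ((hc.const_mul k).const_sub a).const_mul (2 * ℓ)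
      have hD0 : 2 * ℓ * (a - k * Real.cosh (ℓ * 0)) ≠ 0 := by
        rw [mul_zero, Real.cosh_zero]
        refine mul_ne_zero (mul_ne_zero two_ne_zero hℓne) ?_
        intro h; exact hne (by linarith)
      have hdiv := hN.div hD hD0
      constructor
      · rw [hfun]
        refine HasDerivAt.congr_deriv hdiv ?_
        rw [mul_zero, Real.cosh_zero, Real.sinh_zero]
        field_simp
        ring
      · rw [congrFun hfun 0]
        rw [mul_zero, Real.cosh_zero, Real.sinh_zero]
        field_simp
        ring
    · by_cases h2 : k = |a| ∧ a ≠ 0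
      · have ha : a < 0 := by
          rcases lt_trichotomy a 0 with h | h | h
          · exact h
          · exact absurd h h2.2
          · rw [abs_of_pos h] at h2; exact absurd h2.1 hk.ne'
        have hkeq : k = -a := by rw [h2.1, abs_of_neg ha]
        have hfun : (fun T : ℝ => fdel T a k) = fun T : ℝ => T / 4 + 1 / (4 * |a|) := by
          funext T; simp only [fdel, if_neg h1, if_pos h2]
        constructor
        · rw [hfun]
          have hder : HasDerivAt (fun T : ℝ => T / 4 + 1 / (4 * |a|)) (1 / 4) 0 :=
            ((hasDerivAt_id 0).div_const 4).add_const _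
          convert hder using 1
          rw [hkeq]
          have h4 : (2:ℝ) * (-a - a) ≠ 0 := by
            intro h; apply h2.2; linarith
          have ha0 : a ≠ 0 := h2.2
          field_simp
          ring
        · rw [congrFun hfun 0]
          rw [hkeq, abs_of_neg ha]
          rw [zero_div, zero_add]
          congr 1
          ring
      · -- sin branch
        have hgt : |a| < k := by
          rcases le_or_gt 0 a with h | h
          · rwa [abs_of_nonneg h]
          · rw [abs_of_neg h]
            rcases lt_trichotomy k (-a) with h' | h' | h'
            · exact absurd (abs_lt.mpr ⟨by linarith, h'⟩) h1
            · exact absurd ⟨by rw [h', abs_of_neg h], h.ne⟩ h2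
            · exact h'
        set ℓ : ℝ := Real.sqrt (k ^ 2 - a ^ 2) with hℓdef
        have hsq : a ^ 2 < k ^ 2 := by
          calc a ^ 2 = |a| ^ 2 := (sq_abs a).symm
            _ < k ^ 2 := by
              exact pow_lt_pow_left₀ hgt (abs_nonneg a) (by norm_num)
        have hℓ : 0 < ℓ := Real.sqrt_pos.mpr (by linarith)
        have hℓne : ℓ ≠ 0 := hℓ.ne'
        have hfun : (fun T : ℝ => fdel T a k) =
            fun T : ℝ => (-k * Real.sin (ℓ * T) - ℓ) /
              (2 * ℓ * (a - k * Real.cos (ℓ * T))) := by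
          funext T; simp only [fdel, if_neg h1, if_neg h2, hℓdef]
        have hlin : HasDerivAt (fun T : ℝ => ℓ * T) (ℓ * 1) 0 :=
          (hasDerivAt_id 0).const_mul ℓ
        have hs : HasDerivAt (fun T : ℝ => Real.sin (ℓ * T))
            (Real.cos (ℓ * 0) * (ℓ * 1)) 0 :=
          (Real.hasDerivAt_sin (ℓ * 0)).comp 0 hlin
        have hc : HasDerivAt (fun T : ℝ => Real.cos (ℓ * T))
            (-Real.sin (ℓ * 0) * (ℓ * 1)) 0 :=
          (Real.hasDerivAt_cos (ℓ * 0)).comp 0 hlin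
        have hN : HasDerivAt (fun T : ℝ => -k * Real.sin (ℓ * T) - ℓ)
            (-k * (Real.cos (ℓ * 0) * (ℓ * 1))) 0 := (hs.const_mul (-k)).sub_const ℓ
        have hD : HasDerivAt (fun T : ℝ => 2 * ℓ * (a - k * Real.cos (ℓ * T)))
            (2 * ℓ * (-(k * (-Real.sin (ℓ * 0) * (ℓ * 1))))) 0 :=
          ((hc.const_mul k).const_sub a).const_mul (2 * ℓ)
        have hD0 : 2 * ℓ * (a - k * Real.cos (ℓ * 0)) ≠ 0 := by
          rw [mul_zero, Real.cos_zero]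
          refine mul_ne_zero (mul_ne_zero two_ne_zero hℓne) ?_
          intro h; exact hne (by linarith)
        have hdiv := hN.div hD hD0
        constructor
        · rw [hfun]
          refine HasDerivAt.congr_deriv hdiv ?_
          rw [mul_zero, Real.cos_zero, Real.sin_zero]
          field_simp
          ring
        · rw [congrFun hfun 0]
          rw [mul_zero, Real.cos_zero, Real.sin_zero]
          field_simp
          ring
  have hslope := (hasDerivAt_iff_tendsto_slope.mp key.1).mono_left
    (nhdsWithin_mono 0 (fun x hx => Set.mem_compl_singleton_iff.mpr (ne_of_gt hx)))
  refine hslope.congr' ?_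
  filter_upwards [self_mem_nhdsWithin] with T hT
  rw [slope_def_field, key.2, sub_zero]
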